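/- Let K = ℚ(α) be a real quadratic field with discriminant D. Then H(α) ≥ (1/√5)·√D. -/

import Mathlib

open NumberField IntermediateField

/-- If `K = ℚ(α)` is a real quadratic field with discriminant `D`,
then `H(α) ≥ (1/√5)·√D`, where `H(α)` is the maximum of the absolute values of the
coefficients of the (primitive, integral) minimal polynomial `a·x² + b·x + c` of `α`. -/
theorem small_generators_real_quadratic_lower_bound
    (K : Type*) [Field K] [NumberField K]
    (hdeg : Module.finrank ℚ K = 2)
    (hD : 0 < NumberField.discr K)
    (α : K) (hgen : ℚ⟮α⟯ = ⊤)
    (a b c : ℤ)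
    (hroot : (a : K) * α ^ 2 + (b : K) * α + (c : K) = 0)
    (hgcd : Int.gcd (Int.gcd a b) c = 1) :
    ((max |a| (max |b| |c|) : ℤ) : ℝ) ≥
      (1 / Real.sqrt 5) * Real.sqrt (NumberField.discr K : ℝ) := by
  classical
  -- α is not rational
  have hrat : ∀ q : ℚ, α ≠ algebraMap ℚ K q := by
    intro q hq
    have hmem : α ∈ (⊥ : IntermediateField ℚ K) := by
      rw [IntermediateField.mem_bot]; exact ⟨q, hq.symm⟩
    have hbt : (⊥ : IntermediateField ℚ K) = ⊤ := by
      refine le_antisymm bot_le ?_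
      rw [← hgen]
      exact IntermediateField.adjoin_le_iff.mpr (by simpa using hmem)
    have h1 : Module.finrank ℚ K = 1 := by
      have := IntermediateField.finrank_bot (F := ℚ) (E := K)
      rw [hbt] at this
      simpa [IntermediateField.finrank_top'] using this
    omega
  have ha : a ≠ 0 := by
    intro h0
    subst h0
    simp only [Int.cast_zero, zero_mul, zero_add] at hroot
    by_cases hb : b = 0
    · subst hb
      simp only [Int.cast_zero, zero_mul, zero_add] at hroot
      have : c = 0 := by exact_mod_cast hroot
      subst this
      simp at hgcd
    · have : α = algebraMap ℚ K (-(c : ℚ) / (b : ℚ)) := by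
        have hbK : (b : K) ≠ 0 := by
          simpa using (Int.cast_ne_zero (α := K)).mpr hb
        rw [show algebraMap ℚ K (-(c : ℚ) / (b : ℚ)) = ((-(c : ℚ) / (b : ℚ) : ℚ) : K)
          from rfl]
        push_cast
        field_simp
        linear_combination hroot
      exact hrat _ this
  have haK : (a : K) ≠ 0 := by simpa using (Int.cast_ne_zero (α := K)).mpr ha
  set ω : K := (a : K) * α with hω_def
  -- key quadratic relation for ω
  have hω2 : ω ^ 2 = -((a * c : ℤ) : K) - ((b : ℤ) : K) * ω := by
    push_cast
    linear_combination (a : K) * hroot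
  -- ω is an algebraic integer
  have hωint : IsIntegral ℤ ω := by
    refine ⟨Polynomial.X ^ 2 + Polynomial.C b * Polynomial.X + Polynomial.C (a * c), ?_, ?_⟩
    · monicity!
    · simp only [Polynomial.eval₂_add, Polynomial.eval₂_mul, Polynomial.eval₂_pow,
        Polynomial.eval₂_X, Polynomial.eval₂_C, algebraMap_int_eq, Int.coe_castRingHom]
      rw [hω2]
      push_cast
      ring
  -- the family ![1, ω] is linearly independent over ℚ
  have li : LinearIndependent ℚ ![(1 : K), ω] := by
    rw [linearIndependent_fin2]
    constructor
    · show ω ≠ 0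
      intro h0
      have : α = 0 := by
        rcases mul_eq_zero.mp h0 with h | h
        · exact absurd h haK
        · exact h
      exact hrat 0 (by simpa using this)
    · intro q hq
      simp only [Matrix.cons_val_one, Matrix.head_cons, Matrix.cons_val_zero] at hq
      have hq0 : q ≠ 0 := by
        intro h; rw [h, zero_smul] at hq; exact one_ne_zero hq.symm
      apply hrat ((q * (a : ℚ))⁻¹)
      have hqa : (q * (a : ℚ)) ≠ 0 := by
        simp [hq0, ha]
      rw [show algebraMap ℚ K ((q * (a : ℚ))⁻¹) = (((q * (a : ℚ))⁻¹ : ℚ) : K) from rfl]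
      have h1 : ((q * (a : ℚ) : ℚ) : K) * α = 1 := by
        rw [Algebra.smul_def] at hq
        rw [show algebraMap ℚ K q = ((q : ℚ) : K) from rfl] at hq
        push_cast
        linear_combination hq
      rw [Rat.cast_inv]
      exact eq_inv_of_mul_eq_one_right h1
  -- the basis {1, ω} of K over ℚ
  have hcard : Fintype.card (Fin 2) = Module.finrank ℚ K := by simp [hdeg]
  let V : Module.Basis (Fin 2) ℚ K := basisOfLinearIndependentOfCardEqFinrank li hcard
  have hV : ⇑V = ![(1 : K), ω] := coe_basisOfLinearIndependentOfCardEqFinrank li hcard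
  have hV0 : V 0 = 1 := by rw [hV]; rfl
  have hV1 : V 1 = ω := by rw [hV]; rfl
  have smulZ : ∀ (n : ℤ) (x : K), (n : ℚ) • x = (n : K) * x := by
    intro n x
    rw [Algebra.smul_def, show algebraMap ℚ K (n : ℚ) = ((n : ℚ) : K) from rfl]
    push_cast
    ring
  -- auxiliary: representation of combinations
  have repr_combo : ∀ (x : K) (c0 c1 : ℚ), x = c0 • V 0 + c1 • V 1 →
      V.repr x 0 = c0 ∧ V.repr x 1 = c1 := by
    intro x c0 c1 hx
    subst hx
    simp [Finsupp.single_apply]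
  -- traces
  have t1 : Algebra.trace ℚ K 1 = 2 := by
    have := Algebra.trace_algebraMap (S := K) (1 : ℚ)
    simpa [hdeg] using this
  have tω : Algebra.trace ℚ K ω = (-b : ℤ) := by
    rw [Algebra.trace_eq_matrix_trace V ω, Matrix.trace_fin_two]
    have e0 : (Algebra.leftMulMatrix V ω) 0 0 = 0 := by
      rw [Algebra.leftMulMatrix_eq_repr_mul]
      exact (repr_combo (ω * V 0) 0 1 (by rw [hV0, hV1]; simp)).1
    have e1 : (Algebra.leftMulMatrix V ω) 1 1 = -(b : ℚ) := by
      rw [Algebra.leftMulMatrix_eq_repr_mul]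
      refine (repr_combo (ω * V 1) ((-(a*c) : ℤ) : ℚ) ((-b : ℤ) : ℚ) ?_).2
      rw [hV0, hV1, smulZ, smulZ, ← pow_two, hω2]
      push_cast
      ring
    rw [e0, e1]
    push_cast
    ring
  have tω2 : Algebra.trace ℚ K (ω ^ 2) = ((b ^ 2 - 2 * a * c : ℤ) : ℚ) := by
    rw [Algebra.trace_eq_matrix_trace V (ω ^ 2), Matrix.trace_fin_two]
    have e0 : (Algebra.leftMulMatrix V (ω ^ 2)) 0 0 = (-(a*c : ℤ) : ℚ) := by
      rw [Algebra.leftMulMatrix_eq_repr_mul]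
      refine (repr_combo (ω ^ 2 * V 0) ((-(a*c) : ℤ) : ℚ) ((-b : ℤ) : ℚ) ?_).1
      rw [hV0, hV1, smulZ, smulZ, hω2]
      push_cast
      ring
    have e1 : (Algebra.leftMulMatrix V (ω ^ 2)) 1 1 = ((b ^ 2 - a * c : ℤ) : ℚ) := by
      rw [Algebra.leftMulMatrix_eq_repr_mul]
      refine (repr_combo (ω ^ 2 * V 1) ((a * b * c : ℤ) : ℚ) ((b ^ 2 - a * c : ℤ) : ℚ) ?_).2
      rw [hV0, hV1]
      have : ω ^ 2 * ω = ω ^ 2 * ω := rfl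
      calc ω ^ 2 * ω = (-((a * c : ℤ) : K) - ((b : ℤ) : K) * ω) * ω := by rw [hω2]
        _ = -((a * c : ℤ) : K) * ω - ((b : ℤ) : K) * ω ^ 2 := by ring
        _ = -((a * c : ℤ) : K) * ω - ((b : ℤ) : K) * (-((a * c : ℤ) : K) - ((b : ℤ) : K) * ω) := by
            rw [hω2]
        _ = ((a * b * c : ℤ) : ℚ) • (1 : K) + ((b ^ 2 - a * c : ℤ) : ℚ) • ω := by
            rw [smulZ, smulZ]
            push_cast
            ring
    rw [e0, e1]
    push_cast
    ring
  -- the discriminant of the family ![1, ω]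
  have hdiscrV : Algebra.discr ℚ ⇑V = ((b ^ 2 - 4 * a * c : ℤ) : ℚ) := by
    rw [Algebra.discr_def, Matrix.det_fin_two]
    have m00 : Algebra.traceMatrix ℚ ⇑V 0 0 = 2 := by
      simp only [Algebra.traceMatrix_apply, Algebra.traceForm_apply, hV0, mul_one]
      exact t1
    have m01 : Algebra.traceMatrix ℚ ⇑V 0 1 = (-b : ℤ) := by
      simp only [Algebra.traceMatrix_apply, Algebra.traceForm_apply, hV0, hV1, one_mul]
      exact tω
    have m10 : Algebra.traceMatrix ℚ ⇑V 1 0 = (-b : ℤ) := by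
      simp only [Algebra.traceMatrix_apply, Algebra.traceForm_apply, hV0, hV1, mul_one]
      exact tω
    have m11 : Algebra.traceMatrix ℚ ⇑V 1 1 = ((b ^ 2 - 2 * a * c : ℤ) : ℚ) := by
      simp only [Algebra.traceMatrix_apply, Algebra.traceForm_apply, hV1, ← pow_two]
      exact tω2
    rw [m00, m01, m10, m11]
    push_cast
    ring
  -- relate to the field discriminant via the integral basis
  have hcardι : Fintype.card (Module.Free.ChooseBasisIndex ℤ (𝓞 K)) = 2 := by
    rw [← Module.finrank_eq_card_chooseBasisIndex, RingOfIntegers.rank, hdeg]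
  let e : Module.Free.ChooseBasisIndex ℤ (𝓞 K) ≃ Fin 2 :=
    Fintype.equivFinOfCardEq hcardι
  let B : Module.Basis (Fin 2) ℚ K := (integralBasis K).reindex e
  have hdiscrB : Algebra.discr ℚ ⇑B = ((discr K : ℤ) : ℚ) := by
    have : ⇑B = ⇑(integralBasis K) ∘ ⇑e.symm := by
      ext i; simp [B]
    rw [this, Algebra.discr_reindex, ← coe_discr]
  -- the integer matrix expressing 1, ω in the integral basis
  let w : Fin 2 → 𝓞 K := ![1, ⟨ω, hωint⟩]
  have hvw : ∀ j, algebraMap (𝓞 K) K (w j) = V j := by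
    intro j
    fin_cases j
    · simp [w, hV0]
    · simpa [w] using (show algebraMap (𝓞 K) K ⟨ω, hωint⟩ = V 1 from hV1.symm)
  let Z : Matrix (Fin 2) (Fin 2) ℤ :=
    fun i j => (RingOfIntegers.basis K).repr (w j) (e.symm i)
  have hPZ : B.toMatrix ⇑V = Z.map (Int.cast : ℤ → ℚ) := by
    ext i j
    rw [Module.Basis.toMatrix_apply, Matrix.map_apply]
    rw [show B.repr (V j) i = (integralBasis K).repr (V j) (e.symm i) from
      Module.Basis.repr_reindex_apply _ _ _ _]
    rw [← hvw j, integralBasis_repr_apply]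
    simp [Z]
  have hdet : (B.toMatrix ⇑V).det = ((Z.det : ℤ) : ℚ) := by
    rw [hPZ]
    simpa using (RingHom.map_det (Int.castRingHom ℚ) Z).symm
  have hkey : Algebra.discr ℚ ⇑V = ((Z.det ^ 2 * discr K : ℤ) : ℚ) := by
    have h1 := Algebra.discr_of_matrix_vecMul (A := ℚ) (B := K) ⇑B (B.toMatrix ⇑V)
    rw [Module.Basis.toMatrix_map_vecMul] at h1
    rw [h1, hdet, hdiscrB]
    push_cast
    ring
  -- Z.det ≠ 0 since the discriminant of a basis is nonzero
  have hZdet : Z.det ≠ 0 := by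
    intro h0
    have hne := Algebra.discr_not_zero_of_basis ℚ V
    rw [hkey, h0] at hne
    simp at hne
  -- the integer equation
  have heq : b ^ 2 - 4 * a * c = Z.det ^ 2 * discr K := by
    have := hdiscrV.symm.trans hkey
    exact_mod_cast this
  -- D ≤ b² - 4ac
  have hDle : discr K ≤ b ^ 2 - 4 * a * c := by
    have h1 : 1 ≤ Z.det ^ 2 := by
      have := Int.one_le_abs (by simpa using hZdet)
      nlinarith [sq_abs Z.det]
    nlinarith [hD]
  -- b² - 4ac ≤ 5 H²
  set H : ℤ := max |a| (max |b| |c|) with hH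
  have haH : |a| ≤ H := le_max_left _ _
  have hbH : |b| ≤ H := le_trans (le_max_left _ _) (le_max_right _ _)
  have hcH : |c| ≤ H := le_trans (le_max_right _ _) (le_max_right _ _)
  have hHnn : 0 ≤ H := le_trans (abs_nonneg a) haH
  have h5 : b ^ 2 - 4 * a * c ≤ 5 * H ^ 2 := by
    have h1 : b ^ 2 ≤ H ^ 2 := by nlinarith [abs_nonneg b, sq_abs b]
    have h2 : -(a * c) ≤ |a| * |c| := by
      rw [← abs_mul]
      exact neg_le_abs _
    nlinarith [abs_nonneg a, abs_nonneg c]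
  have hD5 : discr K ≤ 5 * H ^ 2 := le_trans hDle h5
  -- final real-number computation
  have hHnnR : (0 : ℝ) ≤ (H : ℝ) := by exact_mod_cast hHnn
  have hs5 : (0 : ℝ) < Real.sqrt 5 := Real.sqrt_pos.mpr (by norm_num)
  rw [ge_iff_le]
  have hsqrt : Real.sqrt (discr K : ℝ) ≤ Real.sqrt 5 * (H : ℝ) := by
    have h1 : (discr K : ℝ) ≤ 5 * (H : ℝ) ^ 2 := by exact_mod_cast hD5
    calc Real.sqrt (discr K : ℝ) ≤ Real.sqrt (5 * (H : ℝ) ^ 2) := Real.sqrt_le_sqrt h1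
      _ = Real.sqrt 5 * Real.sqrt ((H : ℝ) ^ 2) := Real.sqrt_mul (by norm_num) _
      _ = Real.sqrt 5 * (H : ℝ) := by rw [Real.sqrt_sq hHnnR]
  calc 1 / Real.sqrt 5 * Real.sqrt (discr K : ℝ)
      ≤ 1 / Real.sqrt 5 * (Real.sqrt 5 * (H : ℝ)) := by
        apply mul_le_mul_of_nonneg_left hsqrt
        positivity
    _ = (H : ℝ) := by field_simp
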